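/- Assume the inductive setting, and let M be the subgroup of Sym(Z) generated by all the Hᵢ (i ∈ ℤ). Then every nontrivial normal subgroup N of M contains a subgroup S together with a surjective group homomorphism from S onto L₀; likewise, for each i ∈ ℤ, every nontrivial normal subgroup of Lᵢ contains a subgroup admitting a surjective homomorphism onto L₀. -/

import Mathlib

/-- A pre-wreath structure `(Z, Y, H, X)`: `H` is a nontrivial subgroup of `Sym(Z)`,
`X ⊆ Y ⊆ Z`, `X` nonempty, every element of `H` fixes every point outside `Y`,
if `Xh` meets `X` then `h` is the identity on `X`, and every nontrivial `h ∈ H`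
moves some set `Xj` (`j ∈ H`). (Images are written with Lean's left action, so the
set `Xh` of the paper is `⇑h '' X`.) -/
def IsPreWreath {Z : Type*} (Y : Set Z) (H : Subgroup (Equiv.Perm Z)) (X : Set Z) : Prop :=
  H ≠ ⊥ ∧
  (∀ h ∈ H, ∀ z : Z, z ∉ Y → h z = z) ∧
  X ⊆ Y ∧
  X.Nonempty ∧
  (∀ h ∈ H, (⇑h '' X ∩ X).Nonempty → ∀ x ∈ X, h x = x) ∧
  (∀ h ∈ H, h ≠ 1 → ∃ j ∈ H, ⇑h '' (⇑j '' X) ≠ ⇑j '' X)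

/-- The carrier `XH = {Xh : h ∈ H}` of a pre-wreath structure. -/
def wreathCarrier {Z : Type*} (H : Subgroup (Equiv.Perm Z)) (X : Set Z) : Set (Set Z) :=
  {A : Set Z | ∃ h ∈ H, A = ⇑h '' X}

/-- The support of a subgroup of `Sym(Z)`: the points moved by some element. -/
def Supp {Z : Type*} (K : Subgroup (Equiv.Perm Z)) : Set Z :=
  {z : Z | ∃ g ∈ K, g z ≠ z}

/-- The inductive setting: `(Z, fY₀, H₁, Y₀)` is a pre-wreath structure (`Y₁ = Y₀f` is
the image of `Y₀` under the bijection `f`), `Y₀ ⊆ Supp(H₁) ⊆ Y₁` with `Supp(H₁) ≠ Y₁`,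
and `W₀` is a nonempty subset of `Y₀` whose image under `f` misses `Supp(H₁)`. -/
def InductiveSetting {Z : Type*} (H₁ : Subgroup (Equiv.Perm Z)) (f : Equiv.Perm Z)
    (Y₀ W₀ : Set Z) : Prop :=
  IsPreWreath (⇑f '' Y₀) H₁ Y₀ ∧
  Y₀ ⊆ Supp H₁ ∧ Supp H₁ ⊆ ⇑f '' Y₀ ∧ Supp H₁ ≠ ⇑f '' Y₀ ∧
  W₀.Nonempty ∧ W₀ ⊆ Y₀ ∧ (⇑f '' W₀) ∩ Supp H₁ = ∅

/-- `Hᵢ`, the conjugate of `H₁` carried over by `f^(i-1)`: this is the paper's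
`f^{-(i-1)} H₁ f^{i-1}` written in right-action notation, i.e. the subgroup
`{f^(i-1) h f^(-(i-1)) : h ∈ H₁}` of permutations acting on the left. -/
def Hseq {Z : Type*} (H₁ : Subgroup (Equiv.Perm Z)) (f : Equiv.Perm Z) (i : ℤ) :
    Subgroup (Equiv.Perm Z) :=
  Subgroup.map (MulAut.conj (f ^ (i - 1))).toMonoidHom H₁

/-- `R_j`, the subgroup generated by the `Hᵢ` with `i ≥ j`. -/
def Rseq {Z : Type*} (H₁ : Subgroup (Equiv.Perm Z)) (f : Equiv.Perm Z) (j : ℤ) :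
    Subgroup (Equiv.Perm Z) :=
  Subgroup.closure (⋃ i ∈ {i : ℤ | j ≤ i}, (Hseq H₁ f i : Set (Equiv.Perm Z)))

/-- `Lᵢ`, the subgroup generated by the `H_j` with `j < i`. -/
def Lseq {Z : Type*} (H₁ : Subgroup (Equiv.Perm Z)) (f : Equiv.Perm Z) (i : ℤ) :
    Subgroup (Equiv.Perm Z) :=
  Subgroup.closure (⋃ j ∈ {j : ℤ | j < i}, (Hseq H₁ f j : Set (Equiv.Perm Z)))

/-- `M`, the subgroup generated by all the `Hᵢ`, `i ∈ ℤ`. -/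
def Mgrp {Z : Type*} (H₁ : Subgroup (Equiv.Perm Z)) (f : Equiv.Perm Z) :
    Subgroup (Equiv.Perm Z) :=
  Subgroup.closure (⋃ i : ℤ, (Hseq H₁ f i : Set (Equiv.Perm Z)))

/-- `Wᵢ = W₀fⁱ`, the image of `W₀` under the `i`-th power of `f`. -/
def Wseq {Z : Type*} (W₀ : Set Z) (f : Equiv.Perm Z) (i : ℤ) : Set Z :=
  ⇑(f ^ i) '' W₀

theorem Equiv.Perm.apply_inv_self {α : Type*} (f : Equiv.Perm α) (x : α) : f (f⁻¹ x) = x :=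
  f.apply_symm_apply x

theorem Equiv.Perm.inv_apply_self {α : Type*} (f : Equiv.Perm α) (x : α) : f⁻¹ (f x) = x :=
  f.symm_apply_apply x

namespace Stmt13Aux

open Equiv Set Subgroup
open scoped Classical

variable {Z : Type*}

/-- a permutation that fixes everything outside `A` maps `A` onto `A`. -/
lemma image_eq_of_fixOff (σ : Equiv.Perm Z) (A : Set Z) (h : ∀ z ∉ A, σ z = z) :
    ⇑σ '' A = A := by
  ext z
  constructor
  · rintro ⟨x, hx, rfl⟩
    by_contra hz
    have := h _ hz
    have : σ x = x := σ.injective this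
    rw [this] at hz; exact hz hx
  · intro hz
    refine ⟨σ⁻¹ z, ?_, σ.apply_inv_self z⟩
    by_contra hx
    have := h _ hx
    rw [σ.apply_inv_self] at this
    rw [this] at hz; exact hx hz

lemma image_eq_of_fixOn (σ : Equiv.Perm Z) (A : Set Z) (h : ∀ z ∈ A, σ z = z) :
    ⇑σ '' A = A := by
  ext z
  constructor
  · rintro ⟨x, hx, rfl⟩; rw [h x hx]; exact hx
  · intro hz; exact ⟨z, hz, h z hz⟩

lemma mem_image_perm {σ : Equiv.Perm Z} {A : Set Z} {z : Z} :
    z ∈ ⇑σ '' A ↔ σ⁻¹ z ∈ A := by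
  constructor
  · rintro ⟨x, hx, rfl⟩; rwa [σ.inv_apply_self]
  · intro h; exact ⟨σ⁻¹ z, h, σ.apply_inv_self z⟩

lemma image_mul (σ τ : Equiv.Perm Z) (A : Set Z) :
    ⇑(σ * τ) '' A = ⇑σ '' (⇑τ '' A) := by
  rw [Equiv.Perm.coe_mul, Set.image_comp]

/-- The setwise stabilizer of `B` as a subgroup of `Perm Z`. -/
def stab (B : Set Z) : Subgroup (Equiv.Perm Z) where
  carrier := {σ | ∀ z, σ z ∈ B ↔ z ∈ B}
  one_mem' := by intro z; rfl
  mul_mem' := by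
    intro σ τ hσ hτ z
    rw [Equiv.Perm.mul_apply, hσ, hτ]
  inv_mem' := by
    intro σ hσ z
    have := (hσ (σ⁻¹ z)).symm
    rwa [σ.apply_inv_self] at this

lemma mem_stab {B : Set Z} {σ : Equiv.Perm Z} : σ ∈ stab B ↔ ∀ z, σ z ∈ B ↔ z ∈ B :=
  Iff.rfl

lemma mem_stab_of_fixOff {B : Set Z} {σ : Equiv.Perm Z} (h : ∀ z ∉ B, σ z = z) :
    σ ∈ stab B := by
  intro z
  constructor
  · intro hz
    by_contra hzB
    rw [h z hzB] at hz; exact hzB hz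
  · intro hz
    by_contra hσz
    have := h _ hσz
    have : σ z = z := σ.injective this
    rw [this] at hσz; exact hσz hz

/-- Restriction-to-`B` homomorphism on the setwise stabilizer. -/
noncomputable def restr (B : Set Z) : stab (Z := Z) B →* Equiv.Perm Z where
  toFun σ :=
    { toFun := fun z => if z ∈ B then σ.1 z else z
      invFun := fun z => if z ∈ B then σ.1⁻¹ z else z
      left_inv := by
        intro z
        by_cases hz : z ∈ B
        · simp only [hz, if_pos, if_pos ((σ.2 z).mpr hz), Equiv.Perm.inv_apply_self]
        · simp [hz]
      right_inv := by
        intro z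
        by_cases hz : z ∈ B
        · have h2 : σ.1⁻¹ z ∈ B := by
            have h3 := (σ.2 (σ.1⁻¹ z))
            rw [σ.1.apply_inv_self] at h3
            exact h3.mp hz
          simp only [hz, if_pos, if_pos h2, Equiv.Perm.apply_inv_self]
        · simp [hz] }
  map_one' := by
    ext z; simp
  map_mul' := by
    intro σ τ
    ext z
    by_cases hz : z ∈ B
    · have : τ.1 z ∈ B := (τ.2 z).mpr hz
      simp only [Equiv.coe_fn_mk, Equiv.Perm.mul_apply, Subgroup.coe_mul, if_pos hz, if_pos this]
    · simp only [Equiv.coe_fn_mk, Equiv.Perm.mul_apply, if_neg hz]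

lemma restr_apply {B : Set Z} (σ : stab (Z := Z) B) (z : Z) :
    restr B σ z = if z ∈ B then σ.1 z else z := rfl


lemma finish (N C : Subgroup (Equiv.Perm Z)) (B : Set Z) (g' : Equiv.Perm Z)
    (hg' : g' ∈ N)
    (hC_supp : ∀ c ∈ C, ∀ z ∉ B, c z = z)
    (hCN : ∀ c ∈ C, ∀ n ∈ N, c * n * c⁻¹ ∈ N)
    (hdisj : ∀ z ∈ B, g' z ∉ B) :
    ∃ S : Subgroup (Equiv.Perm Z), S ≤ N ∧ ∃ φ : S →* C, Function.Surjective φ := by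
  set gens : Set (Equiv.Perm Z) := (fun c => g' * c * g'⁻¹ * c⁻¹) '' (C : Set _) with hgens
  set S : Subgroup (Equiv.Perm Z) := Subgroup.closure gens with hS
  have hCB : ∀ c ∈ C, ∀ z ∈ B, c z ∈ B := by
    intro c hc z hz
    exact (mem_stab_of_fixOff (hC_supp c hc) z).mpr hz
  have hg'invB : ∀ z ∈ B, g'⁻¹ z ∉ B := by
    intro z hz h
    have := hdisj _ h
    rw [g'.apply_inv_self] at this
    exact this hz
  have k1 : ∀ c ∈ C, ∀ z ∈ B, (g' * c * g'⁻¹ * c⁻¹) z = c⁻¹ z := by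
    intro c hc z hz
    have h1 : c⁻¹ z ∈ B := hCB c⁻¹ (inv_mem hc) z hz
    have h2 : g'⁻¹ (c⁻¹ z) ∉ B := hg'invB _ h1
    have h3 : c (g'⁻¹ (c⁻¹ z)) = g'⁻¹ (c⁻¹ z) := hC_supp c hc _ h2
    simp only [Equiv.Perm.mul_apply, h3, Equiv.Perm.apply_inv_self]
  have k2 : ∀ c ∈ C, ∀ z, z ∉ B → (g' * c * g'⁻¹ * c⁻¹) z ∉ B := by
    intro c hc z hz
    have h0 : c⁻¹ z = z := hC_supp c⁻¹ (inv_mem hc) z hz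
    simp only [Equiv.Perm.mul_apply, h0]
    by_cases hy : g'⁻¹ z ∈ B
    · exact hdisj _ (hCB c hc _ hy)
    · rw [hC_supp c hc _ hy, g'.apply_inv_self]; exact hz
  have hgen_stab : ∀ x ∈ gens, x ∈ stab B := by
    rintro x ⟨c, hc, rfl⟩
    intro z
    constructor
    · intro h
      by_contra hz
      exact k2 c hc z hz h
    · intro hz
      rw [k1 c hc z hz]
      exact hCB c⁻¹ (inv_mem hc) z hz
  have hS_stab : S ≤ stab B := Subgroup.closure_le _ |>.mpr hgen_stab
  have hSN : S ≤ N := by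
    apply Subgroup.closure_le _ |>.mpr
    rintro x ⟨c, hc, rfl⟩
    have h1 : c * g'⁻¹ * c⁻¹ ∈ N := hCN c hc g'⁻¹ (inv_mem hg')
    have := N.mul_mem hg' h1
    simpa [mul_assoc] using this
  have hres : ∀ c (hc : c ∈ C) (hmem : (g' * c * g'⁻¹ * c⁻¹) ∈ stab B),
      restr B ⟨_, hmem⟩ = c⁻¹ := by
    intro c hc hmem
    ext z
    rw [restr_apply]
    by_cases hz : z ∈ B
    · rw [if_pos hz]; exact k1 c hc z hz
    · rw [if_neg hz, hC_supp c⁻¹ (inv_mem hc) z hz]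
  have claim : ∀ x (_ : x ∈ S), ∀ hst : x ∈ stab B, restr B ⟨x, hst⟩ ∈ C := by
    intro x hx
    induction hx using Subgroup.closure_induction with
    | mem x hxg =>
        intro hst
        obtain ⟨c, hc, rfl⟩ := hxg
        rw [hres c hc hst]
        exact inv_mem hc
    | one =>
        intro hst
        have : (⟨1, hst⟩ : stab (Z := Z) B) = 1 := rfl
        rw [this, map_one]; exact one_mem C
    | mul x y hx hy ihx ihy =>
        intro hst
        have hxs : x ∈ stab B := hS_stab hx
        have hys : y ∈ stab B := hS_stab hy
        have : (⟨x * y, hst⟩ : stab (Z := Z) B) = ⟨x, hxs⟩ * ⟨y, hys⟩ := rfl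
        rw [this, map_mul]
        exact mul_mem (ihx hxs) (ihy hys)
    | inv x hx ihx =>
        intro hst
        have hxs : x ∈ stab B := hS_stab hx
        have : (⟨x⁻¹, hst⟩ : stab (Z := Z) B) = (⟨x, hxs⟩)⁻¹ := rfl
        rw [this, map_inv]
        exact inv_mem (ihx hxs)
  set ψ : S →* Equiv.Perm Z := (restr B).comp (Subgroup.inclusion hS_stab) with hψ
  have hψC : ∀ s : S, ψ s ∈ C := by
    intro s
    exact claim s.1 s.2 (hS_stab s.2)
  refine ⟨S, hSN, ψ.codRestrict C hψC, ?_⟩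
  intro c
  set d : Equiv.Perm Z := (c : Equiv.Perm Z) with hd
  have hdC : d⁻¹ ∈ C := inv_mem c.2
  have hxg : g' * d⁻¹ * g'⁻¹ * (d⁻¹)⁻¹ ∈ gens := ⟨d⁻¹, hdC, rfl⟩
  refine ⟨⟨_, Subgroup.subset_closure hxg⟩, ?_⟩
  apply Subtype.ext
  show ψ _ = d
  have : ψ ⟨_, Subgroup.subset_closure hxg⟩ =
      restr B ⟨g' * d⁻¹ * g'⁻¹ * (d⁻¹)⁻¹, hS_stab (Subgroup.subset_closure hxg)⟩ := rfl
  rw [this, hres d⁻¹ hdC, inv_inv]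

section Levels

variable {Z : Type*} (H₁ : Subgroup (Equiv.Perm Z)) (f : Equiv.Perm Z) (Y₀ W₀ : Set Z)

/-- `Yᵢ = Y₀ fⁱ`. -/
def Yi (i : ℤ) : Set Z := ⇑(f ^ i) '' Y₀

/-- the subgroup generated by the `H_j` with `b ≤ j < r`. -/
def Lint (b r : ℤ) : Subgroup (Equiv.Perm Z) :=
  Subgroup.closure (⋃ j ∈ {j : ℤ | b ≤ j ∧ j < r}, (Hseq H₁ f j : Set (Equiv.Perm Z)))

/-- the subgroup of permutations fixing every point outside `A`. -/
def fixOffSub (A : Set Z) : Subgroup (Equiv.Perm Z) where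
  carrier := {σ | ∀ z ∉ A, σ z = z}
  one_mem' := fun z _ => rfl
  mul_mem' := by
    intro σ τ hσ hτ z hz
    rw [Equiv.Perm.mul_apply, hτ z hz, hσ z hz]
  inv_mem' := by
    intro σ hσ z hz
    have h := hσ z hz
    nth_rewrite 1 [← h]
    exact σ.inv_apply_self z

lemma zpow_mul_single (f : Equiv.Perm Z) (i j : ℤ) (h : i + 1 = j) : f ^ i * f = f ^ j := by
  subst h; rw [zpow_add_one]

lemma mem_image_conj {H : Subgroup (Equiv.Perm Z)} {σ g : Equiv.Perm Z} :
    g ∈ Subgroup.map (MulAut.conj σ).toMonoidHom H ↔ ∃ h ∈ H, g = σ * h * σ⁻¹ := by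
  rw [Subgroup.mem_map]
  constructor
  · rintro ⟨h, hh, rfl⟩; exact ⟨h, hh, rfl⟩
  · rintro ⟨h, hh, rfl⟩; exact ⟨h, hh, rfl⟩

lemma conj_image_image (σ h : Equiv.Perm Z) (A : Set Z) :
    ⇑(σ * h * σ⁻¹) '' (⇑σ '' A) = ⇑σ '' (⇑h '' A) := by
  rw [image_mul, image_mul, ← image_mul (σ⁻¹) σ A, inv_mul_cancel]
  simp

/-- pre-wreath structures transport along conjugation. -/
lemma preWreath_conj {Y X : Set Z} {H : Subgroup (Equiv.Perm Z)} (σ : Equiv.Perm Z)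
    (hp : IsPreWreath Y H X) :
    IsPreWreath (⇑σ '' Y) (Subgroup.map (MulAut.conj σ).toMonoidHom H) (⇑σ '' X) := by
  obtain ⟨hne, hfix, hXY, hXne, hdich, hmove⟩ := hp
  refine ⟨?_, ?_, Set.image_mono hXY, hXne.image _, ?_, ?_⟩
  · intro hbot
    apply hne
    rw [Subgroup.eq_bot_iff_forall] at hbot ⊢
    intro x hx
    have : σ * x * σ⁻¹ ∈ Subgroup.map (MulAut.conj σ).toMonoidHom H :=
      mem_image_conj.mpr ⟨x, hx, rfl⟩
    have h1 := hbot _ this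
    have : σ * x * σ⁻¹ = σ * 1 * σ⁻¹ := by rw [h1]; group
    have := mul_left_cancel (mul_right_cancel this)
    simpa using this
  · intro g hg z hz
    obtain ⟨h, hh, rfl⟩ := mem_image_conj.mp hg
    have h1 : σ⁻¹ z ∉ Y := by
      intro hmem
      exact hz ⟨σ⁻¹ z, hmem, σ.apply_inv_self z⟩
    simp only [Equiv.Perm.mul_apply, hfix h hh _ h1, Equiv.Perm.apply_inv_self]
  · intro g hg hne2 x hx
    obtain ⟨h, hh, rfl⟩ := mem_image_conj.mp hg
    rw [conj_image_image] at hne2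
    have h2 : (⇑h '' X ∩ X).Nonempty := by
      rw [← Set.image_inter σ.injective] at hne2
      exact hne2.of_image
    obtain ⟨x', hx', rfl⟩ := hx
    simp only [Equiv.Perm.mul_apply, Equiv.Perm.inv_apply_self, hdich h hh h2 x' hx']
  · intro g hg hgne
    obtain ⟨h, hh, rfl⟩ := mem_image_conj.mp hg
    have hne1 : h ≠ 1 := by
      rintro rfl
      apply hgne; group
    obtain ⟨j, hj, hjne⟩ := hmove h hh hne1
    refine ⟨σ * j * σ⁻¹, mem_image_conj.mpr ⟨j, hj, rfl⟩, ?_⟩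
    rw [conj_image_image, conj_image_image]
    intro heq
    exact hjne (Set.image_injective.mpr σ.injective heq)

variable {H₁ f Y₀ W₀}
variable (hs : InductiveSetting H₁ f Y₀ W₀)

include hs

lemma pw (j : ℤ) : IsPreWreath (Yi f Y₀ j) (Hseq H₁ f j) (Yi f Y₀ (j - 1)) := by
  have h := preWreath_conj (σ := f ^ (j - 1)) hs.1
  have h1 : ⇑(f ^ (j - 1)) '' (⇑f '' Y₀) = Yi f Y₀ j := by
    rw [← image_mul, zpow_mul_single f (j - 1) j (by ring)]
    rfl
  rw [h1] at h
  exact h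

lemma Ymono : ∀ {i j : ℤ}, i ≤ j → Yi f Y₀ i ⊆ Yi f Y₀ j := by
  have base : Y₀ ⊆ ⇑f '' Y₀ := fun z hz => hs.2.2.1 (hs.2.1 hz)
  have step : ∀ i : ℤ, Yi f Y₀ i ⊆ Yi f Y₀ (i + 1) := by
    intro i
    have := Set.image_mono (f := ⇑(f ^ i)) base
    rw [← image_mul, zpow_mul_single f i (i + 1) rfl] at this
    exact this
  intro i j hij
  exact Int.le_induction (motive := fun j _ => Yi f Y₀ i ⊆ Yi f Y₀ j) (fun _ h => h)
    (fun k _ ih z hz => step k (ih hz)) j hij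

lemma suppH {j : ℤ} {h : Equiv.Perm Z} (hh : h ∈ Hseq H₁ f j) :
    ∀ z ∉ Yi f Y₀ j, h z = z := fun z hz => (pw hs j).2.1 h hh z hz

lemma HpresY {j : ℤ} {h : Equiv.Perm Z} (hh : h ∈ Hseq H₁ f j) :
    ⇑h '' Yi f Y₀ j = Yi f Y₀ j :=
  image_eq_of_fixOff h _ (suppH hs hh)

lemma block_sub {j : ℤ} {a : Equiv.Perm Z} (ha : a ∈ Hseq H₁ f j) :
    ⇑a '' Yi f Y₀ (j - 1) ⊆ Yi f Y₀ j := by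
  have h1 : ⇑a '' Yi f Y₀ (j - 1) ⊆ ⇑a '' Yi f Y₀ j :=
    Set.image_mono ((pw hs j).2.2.1)
  rwa [HpresY hs ha] at h1

lemma dich2 {j : ℤ} {a b : Equiv.Perm Z} (ha : a ∈ Hseq H₁ f j) (hb : b ∈ Hseq H₁ f j)
    (hne : (⇑a '' Yi f Y₀ (j - 1) ∩ ⇑b '' Yi f Y₀ (j - 1)).Nonempty) :
    ∀ x ∈ Yi f Y₀ (j - 1), a x = b x := by
  intro x hx
  set X := Yi f Y₀ (j - 1)
  have hc : b⁻¹ * a ∈ Hseq H₁ f j := mul_mem (inv_mem hb) ha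
  have hne2 : (⇑(b⁻¹ * a) '' X ∩ X).Nonempty := by
    obtain ⟨z, ⟨x₁, hx₁, rfl⟩, ⟨x₂, hx₂, hx₂e⟩⟩ := hne
    refine ⟨b⁻¹ (a x₁), ⟨x₁, hx₁, rfl⟩, ?_⟩
    rw [← hx₂e, Equiv.Perm.inv_apply_self]
    exact hx₂
  have := (pw hs j).2.2.2.2.1 _ hc hne2 x hx
  rw [Equiv.Perm.mul_apply] at this
  have := congrArg b this
  rwa [Equiv.Perm.apply_inv_self] at this

lemma dich2_img {j : ℤ} {a b : Equiv.Perm Z} (ha : a ∈ Hseq H₁ f j) (hb : b ∈ Hseq H₁ f j)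
    (hne : (⇑a '' Yi f Y₀ (j - 1) ∩ ⇑b '' Yi f Y₀ (j - 1)).Nonempty) :
    ⇑a '' Yi f Y₀ (j - 1) = ⇑b '' Yi f Y₀ (j - 1) := by
  have h := dich2 hs ha hb hne
  ext z
  constructor
  · rintro ⟨x, hx, rfl⟩; rw [h x hx]; exact ⟨x, hx, rfl⟩
  · rintro ⟨x, hx, rfl⟩; rw [← h x hx]; exact ⟨x, hx, rfl⟩

lemma suppLint {b r : ℤ} : Lint H₁ f b r ≤ fixOffSub (Yi f Y₀ (r - 1)) := by
  apply Subgroup.closure_le _ |>.mpr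
  intro x hx
  simp only [Set.mem_iUnion] at hx
  obtain ⟨j, ⟨hbj, hjr⟩, hxj⟩ := hx
  intro z hz
  apply suppH hs hxj
  intro hmem
  exact hz (Ymono hs (by omega) hmem)

lemma suppLseq {r : ℤ} : Lseq H₁ f r ≤ fixOffSub (Yi f Y₀ (r - 1)) := by
  apply Subgroup.closure_le _ |>.mpr
  intro x hx
  simp only [Set.mem_iUnion] at hx
  obtain ⟨j, hj, hxj⟩ := hx
  intro z hz
  apply suppH hs hxj
  intro hmem
  exact hz (Ymono hs (by have : j < r := hj; omega) hmem)

end Levels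

section Conj

variable {Z : Type*} {H₁ : Subgroup (Equiv.Perm Z)} {f : Equiv.Perm Z} {Y₀ W₀ : Set Z}

lemma Hseq_add (t i : ℤ) :
    Subgroup.map (MulAut.conj (f ^ t)).toMonoidHom (Hseq H₁ f i) = Hseq H₁ f (i + t) := by
  unfold Hseq
  rw [Subgroup.map_map]
  congr 1
  ext x
  simp only [MonoidHom.comp_apply, MulEquiv.coe_toMonoidHom, MulAut.conj_apply]
  have h1 : f ^ t * f ^ (i - 1) = f ^ (i + t - 1) := by
    rw [← zpow_add]; congr 1; ring
  rw [← h1]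
  group

lemma Lseq_conj (t : ℤ) :
    Subgroup.map (MulAut.conj (f ^ t)).toMonoidHom (Lseq H₁ f 0) = Lseq H₁ f t := by
  unfold Lseq
  rw [MonoidHom.map_closure]
  congr 1
  rw [Set.image_iUnion₂]
  ext x
  simp only [Set.mem_iUnion, Set.mem_setOf_eq]
  constructor
  · rintro ⟨j, hj, hx⟩
    refine ⟨j + t, by omega, ?_⟩
    have h2 : (⇑(MulAut.conj (f ^ t)).toMonoidHom '' ((Hseq H₁ f j : Set (Equiv.Perm Z))))
        = (Hseq H₁ f (j + t) : Set (Equiv.Perm Z)) := by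
      rw [← Subgroup.coe_map, Hseq_add]
    rwa [h2] at hx
  · rintro ⟨j, hj, hx⟩
    refine ⟨j - t, by omega, ?_⟩
    have h2 : (⇑(MulAut.conj (f ^ t)).toMonoidHom '' ((Hseq H₁ f (j - t) : Set (Equiv.Perm Z))))
        = (Hseq H₁ f j : Set (Equiv.Perm Z)) := by
      rw [← Subgroup.coe_map, Hseq_add, show j - t + t = j by ring]
    rwa [h2]

lemma Hseq_le_Lint {b r j : ℤ} (h1 : b ≤ j) (h2 : j < r) : Hseq H₁ f j ≤ Lint H₁ f b r := by
  intro x hx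
  apply Subgroup.subset_closure
  exact Set.mem_iUnion₂.mpr ⟨j, ⟨h1, h2⟩, hx⟩

lemma Hseq_le_Lseq {i j : ℤ} (h : j < i) : Hseq H₁ f j ≤ Lseq H₁ f i := by
  intro x hx
  apply Subgroup.subset_closure
  exact Set.mem_iUnion₂.mpr ⟨j, h, hx⟩

lemma Hseq_le_M (j : ℤ) : Hseq H₁ f j ≤ Mgrp H₁ f := by
  intro x hx
  apply Subgroup.subset_closure
  exact Set.mem_iUnion.mpr ⟨j, hx⟩

lemma Lseq_le_of_forall {r : ℤ} {G : Subgroup (Equiv.Perm Z)}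
    (hG : ∀ j < r, Hseq H₁ f j ≤ G) : Lseq H₁ f r ≤ G := by
  apply Subgroup.closure_le _ |>.mpr
  intro x hx
  obtain ⟨j, hj, hxj⟩ := Set.mem_iUnion₂.mp hx
  exact hG j hj hxj

lemma Lint_mono_left {b b' r : ℤ} (h : b' ≤ b) : Lint H₁ f b r ≤ Lint H₁ f b' r := by
  apply Subgroup.closure_mono
  intro x hx
  obtain ⟨j, ⟨h1, h2⟩, hxj⟩ := Set.mem_iUnion₂.mp hx
  exact Set.mem_iUnion₂.mpr ⟨j, ⟨by omega, h2⟩, hxj⟩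

lemma exists_Lint_of_mem_Lseq {r : ℤ} {g : Equiv.Perm Z} (hg : g ∈ Lseq H₁ f r) :
    ∃ n : ℕ, g ∈ Lint H₁ f (r - n) r := by
  have heq : Lseq H₁ f r = ⨆ n : ℕ, Lint H₁ f (r - n) r := by
    unfold Lseq Lint
    rw [← Subgroup.closure_iUnion]
    congr 1
    ext x
    simp only [Set.mem_iUnion, Set.mem_setOf_eq]
    constructor
    · rintro ⟨j, hj, hx⟩
      exact ⟨(r - j).toNat, j, ⟨by omega, hj⟩, hx⟩
    · rintro ⟨n, j, ⟨h1, h2⟩, hx⟩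
      exact ⟨j, h2, hx⟩
  rw [heq] at hg
  have hdir : Directed (· ≤ ·) (fun n : ℕ => Lint H₁ f (r - n) r) := by
    intro m n
    exact ⟨max m n, Lint_mono_left (by omega), Lint_mono_left (by omega)⟩
  exact (Subgroup.mem_iSup_of_directed hdir).mp hg

lemma exists_Lint_of_mem_M {g : Equiv.Perm Z} (hg : g ∈ Mgrp H₁ f) :
    ∃ n : ℕ, g ∈ Lint H₁ f (-(n : ℤ)) n := by
  have heq : Mgrp H₁ f = ⨆ n : ℕ, Lint H₁ f (-(n : ℤ)) n := by
    unfold Mgrp Lint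
    rw [← Subgroup.closure_iUnion]
    congr 1
    ext x
    simp only [Set.mem_iUnion, Set.mem_setOf_eq]
    constructor
    · rintro ⟨j, hx⟩
      exact ⟨j.natAbs + 1, j, ⟨by omega, by omega⟩, hx⟩
    · rintro ⟨n, j, _, hx⟩
      exact ⟨j, hx⟩
  rw [heq] at hg
  have hdir : Directed (· ≤ ·) (fun n : ℕ => Lint H₁ f (-(n : ℤ)) (n : ℤ)) := by
    intro m n
    refine ⟨max m n, ?_, ?_⟩ <;>
    · apply Subgroup.closure_mono
      intro x hx
      obtain ⟨j, ⟨h1, h2⟩, hxj⟩ := Set.mem_iUnion₂.mp hx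
      exact Set.mem_iUnion₂.mpr ⟨j, ⟨by omega, by omega⟩, hxj⟩
  exact (Subgroup.mem_iSup_of_directed hdir).mp hg

end Conj

section Blocks

variable {Z : Type*} (H₁ : Subgroup (Equiv.Perm Z)) (f : Equiv.Perm Z) (Y₀ : Set Z)

/-- union of the level-`r` blocks. -/
def blockU (r : ℤ) : Set Z :=
  ⋃ a ∈ (Hseq H₁ f r : Set (Equiv.Perm Z)), ⇑a '' Yi f Y₀ (r - 1)

variable {H₁ f Y₀}
variable {W₀ : Set Z}

lemma perm_inv_image_image (σ : Equiv.Perm Z) (A : Set Z) : ⇑σ⁻¹ '' (⇑σ '' A) = A := by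
  rw [← image_mul, inv_mul_cancel]
  simp

lemma mem_blockU {r : ℤ} {z : Z} :
    z ∈ blockU H₁ f Y₀ r ↔ ∃ a ∈ Hseq H₁ f r, z ∈ ⇑a '' Yi f Y₀ (r - 1) := by
  simp [blockU, Set.mem_iUnion]

lemma blockU_apply_mem {r : ℤ} {h : Equiv.Perm Z} (hh : h ∈ Hseq H₁ f r) {z : Z} :
    h z ∈ blockU H₁ f Y₀ r ↔ z ∈ blockU H₁ f Y₀ r := by
  constructor
  · intro hz
    obtain ⟨a, ha, x, hx, he⟩ := mem_blockU.mp hz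
    apply mem_blockU.mpr
    refine ⟨h⁻¹ * a, mul_mem (inv_mem hh) ha, x, hx, ?_⟩
    rw [Equiv.Perm.mul_apply]
    apply h.injective
    rw [Equiv.Perm.apply_inv_self, he]
  · intro hz
    obtain ⟨a, ha, x, hx, he⟩ := mem_blockU.mp hz
    apply mem_blockU.mpr
    refine ⟨h * a, mul_mem hh ha, x, hx, ?_⟩
    rw [Equiv.Perm.mul_apply, he]

variable (hs : InductiveSetting H₁ f Y₀ W₀)
include hs

lemma Cstar {b r : ℤ} {v : Equiv.Perm Z} (hv : v ∈ Lint H₁ f b (r + 1)) :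
    ∀ a ∈ Hseq H₁ f r, ∃ h ∈ Hseq H₁ f r, ∃ w ∈ Lint H₁ f b r,
      ∀ x ∈ Yi f Y₀ (r - 1), v (a x) = h (w x) := by
  set X := Yi f Y₀ (r - 1) with hX
  let P : Equiv.Perm Z → Prop := fun u => ∀ a ∈ Hseq H₁ f r, ∃ h ∈ Hseq H₁ f r,
    ∃ w ∈ Lint H₁ f b r, ∀ x ∈ X, u (a x) = h (w x)
  suffices hsuf : P v ∧ P v⁻¹ by exact hsuf.1
  induction hv using Subgroup.closure_induction with
  | mem x hxg =>
      obtain ⟨j, hj, hxj⟩ := Set.mem_iUnion₂.mp hxg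
      have hbj : b ≤ j := hj.1
      have hjr : j < r + 1 := hj.2
      have hgen : ∀ u, u ∈ Hseq H₁ f j → P u := by
        intro u hu
        by_cases hjr' : j = r
        · subst hjr'
          intro a ha
          exact ⟨u * a, mul_mem hu ha, 1, one_mem _,
            fun x _ => by simp [Equiv.Perm.mul_apply]⟩
        · intro a ha
          by_cases hmeet : (⇑a '' X ∩ X).Nonempty
          · have hfix : ∀ x ∈ X, a x = x := (pw hs r).2.2.2.2.1 a ha hmeet
            refine ⟨1, one_mem _, u, Hseq_le_Lint hbj (by omega) hu, fun x hx => ?_⟩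
            rw [hfix x hx]; simp
          · refine ⟨a, ha, 1, one_mem _, fun x hx => ?_⟩
            have hax : a x ∈ ⇑a '' X := ⟨x, hx, rfl⟩
            have haxX : a x ∉ Yi f Y₀ j := by
              intro hmem
              have h2 : a x ∈ X := Ymono hs (by omega) hmem
              exact hmeet ⟨a x, hax, h2⟩
            rw [suppH hs hu _ haxX]; simp
      exact ⟨hgen x hxj, hgen x⁻¹ (inv_mem hxj)⟩
  | one =>
      constructor <;>
      · intro a ha
        refine ⟨a, ha, 1, one_mem _, fun x _ => by simp⟩
  | mul x y hx hy ihx ihy =>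
      have hcomp : ∀ u₁ u₂, P u₁ → P u₂ → P (u₁ * u₂) := by
        intro u₁ u₂ P1 P2 a ha
        obtain ⟨h₂, hh₂, w₂, hw₂, e₂⟩ := P2 a ha
        obtain ⟨h₁, hh₁, w₁, hw₁, e₁⟩ := P1 h₂ hh₂
        refine ⟨h₁, hh₁, w₁ * w₂, mul_mem hw₁ hw₂, fun x hx => ?_⟩
        have hw₂x : w₂ x ∈ X := by
          have himg := image_eq_of_fixOff w₂ X (fun z hz => suppLint hs hw₂ z hz)
          rw [← himg]; exact ⟨x, hx, rfl⟩
        rw [Equiv.Perm.mul_apply, e₂ x hx, e₁ (w₂ x) hw₂x, Equiv.Perm.mul_apply]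
      exact ⟨hcomp _ _ ihx.1 ihy.1, by rw [mul_inv_rev]; exact hcomp _ _ ihy.2 ihx.2⟩
  | inv x hx ihx =>
      exact ⟨ihx.2, by rw [inv_inv]; exact ihx.1⟩

lemma Dblocks {b r : ℤ} {v : Equiv.Perm Z} (hv : v ∈ Lint H₁ f b (r + 1)) :
    ∃ h ∈ Hseq H₁ f r, (∀ z ∉ blockU H₁ f Y₀ r, v z = h z) ∧
      (∀ a ∈ Hseq H₁ f r, ⇑v '' (⇑a '' Yi f Y₀ (r - 1)) = ⇑h '' (⇑a '' Yi f Y₀ (r - 1))) := by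
  set X := Yi f Y₀ (r - 1) with hX
  set U := blockU H₁ f Y₀ r with hU
  have hXU : X ⊆ U := by
    intro z hz
    exact mem_blockU.mpr ⟨1, one_mem _, by simpa using hz⟩
  induction hv using Subgroup.closure_induction with
  | mem x hxg =>
      obtain ⟨j, hj, hxj⟩ := Set.mem_iUnion₂.mp hxg
      have hbj : b ≤ j := hj.1
      have hjr : j < r + 1 := hj.2
      by_cases hjr' : j = r
      · subst hjr'
        exact ⟨x, hxj, fun z _ => rfl, fun a _ => rfl⟩
      · refine ⟨1, one_mem _, ?_, ?_⟩
        · intro z hz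
          have hzX : z ∉ Yi f Y₀ j := fun hmem =>
            hz (hXU (Ymono hs (by omega) hmem))
          rw [suppH hs hxj z hzX]; simp
        · intro a ha
          have h1 : ⇑(1 : Equiv.Perm Z) '' (⇑a '' X) = ⇑a '' X := by simp
          rw [h1]
          by_cases hmeet : (⇑a '' X ∩ X).Nonempty
          · have hfix : ∀ z ∈ X, a z = z := (pw hs r).2.2.2.2.1 a ha hmeet
            have haX : ⇑a '' X = X := image_eq_of_fixOn a X hfix
            rw [haX]
            exact image_eq_of_fixOff x X (fun z hz => suppH hs hxj z
              (fun hmem => hz (Ymono hs (by omega) hmem)))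
          · apply image_eq_of_fixOn
            intro z hz
            apply suppH hs hxj
            intro hmem
            exact hmeet ⟨z, hz, Ymono hs (by omega) hmem⟩
  | one => exact ⟨1, one_mem _, fun z _ => rfl, fun a _ => rfl⟩
  | mul x y hx hy ihx ihy =>
      obtain ⟨h₁, hh₁, o₁, b₁⟩ := ihx
      obtain ⟨h₂, hh₂, o₂, b₂⟩ := ihy
      refine ⟨h₁ * h₂, mul_mem hh₁ hh₂, ?_, ?_⟩
      · intro z hz
        have h2z : h₂ z ∉ U := fun hmem => hz ((blockU_apply_mem hh₂).mp hmem)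
        rw [Equiv.Perm.mul_apply, o₂ z hz, o₁ _ h2z, Equiv.Perm.mul_apply]
      · intro a ha
        rw [image_mul, b₂ a ha, ← image_mul h₂ a X, b₁ (h₂ * a) (mul_mem hh₂ ha),
          image_mul h₂ a X, ← image_mul, ← image_mul, mul_assoc]
  | inv x hx ihx =>
      obtain ⟨h, hh, o, bl⟩ := ihx
      refine ⟨h⁻¹, inv_mem hh, ?_, ?_⟩
      · intro z hz
        have hz2 : h⁻¹ z ∉ U := fun hmem => hz ((blockU_apply_mem (inv_mem hh)).mp hmem)
        have hkey : x (h⁻¹ z) = z := by rw [o _ hz2, Equiv.Perm.apply_inv_self]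
        nth_rewrite 1 [← hkey]
        rw [Equiv.Perm.inv_apply_self]
      · intro a ha
        have hkey : ⇑x '' (⇑h⁻¹ '' (⇑a '' X)) = ⇑a '' X := by
          rw [← image_mul h⁻¹ a X, bl (h⁻¹ * a) (mul_mem (inv_mem hh) ha),
            ← image_mul, mul_inv_cancel_left]
        conv_lhs => rw [← hkey]
        rw [perm_inv_image_image]

end Blocks

section MainPart

variable {Z : Type*} {H₁ : Subgroup (Equiv.Perm Z)} {f : Equiv.Perm Z} {Y₀ W₀ : Set Z}

lemma image_comp_of_eqOn {σ τ ρ π : Equiv.Perm Z} {A : Set Z}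
    (h : ∀ x ∈ A, σ (τ x) = ρ (π x)) : ⇑σ '' (⇑τ '' A) = ⇑ρ '' (⇑π '' A) := by
  rw [← Set.image_comp, ← Set.image_comp]
  exact Set.image_congr h

variable (hs : InductiveSetting H₁ f Y₀ W₀)
include hs

lemma main (G N : Subgroup (Equiv.Perm Z))
    (hnorm : ∀ m ∈ G, ∀ n ∈ N, m * n * m⁻¹ ∈ N) :
    ∀ n : ℕ, ∀ r b : ℤ, r - b ≤ n → ∀ v δ : Equiv.Perm Z, v ∈ Lint H₁ f b r → v ≠ 1 →
      (∀ x ∈ Yi f Y₀ (r - 1), δ x = v x) → δ ∈ N → (∀ j < r, Hseq H₁ f j ≤ G) →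
      ∃ S : Subgroup (Equiv.Perm Z), S ≤ N ∧ ∃ φ : S →* Lseq H₁ f 0, Function.Surjective φ := by
  intro n
  induction n with
  | zero =>
      intro r b hrb v δ hv hvne _ _ _
      exfalso
      have hempty : (⋃ j ∈ {j : ℤ | b ≤ j ∧ j < r}, (Hseq H₁ f j : Set (Equiv.Perm Z))) = ∅ := by
        ext x
        simp only [Set.mem_iUnion, Set.mem_setOf_eq, Set.mem_empty_iff_false, iff_false]
        rintro ⟨j, ⟨h1, h2⟩, _⟩
        omega
      have hbot : Lint H₁ f b r = ⊥ := by
        unfold Lint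
        rw [hempty, Subgroup.closure_empty]
      rw [hbot, Subgroup.mem_bot] at hv
      exact hvne hv
  | succ n ih =>
      intro r b hrb v δ hv hvne hagree hδ hG
      have hvr : v ∈ Lint H₁ f b (r - 1 + 1) := by rwa [show r - 1 + 1 = r by ring]
      set X := Yi f Y₀ (r - 1 - 1) with hXdef
      by_cases hstab : ∀ a ∈ Hseq H₁ f (r - 1), ⇑v '' (⇑a '' X) = ⇑a '' X
      · -- Case B : v stabilizes all blocks; descend one level
        obtain ⟨h, hh, hoff, hblk⟩ := Dblocks hs hvr
        have hh1 : h = 1 := by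
          by_contra hne1
          obtain ⟨a, ha, hmv⟩ := (pw hs (r - 1)).2.2.2.2.2 h hh hne1
          exact hmv ((hblk a ha).symm.trans (hstab a ha))
        obtain ⟨z₀, hz₀⟩ : ∃ z, v z ≠ z := by
          by_contra hall
          push_neg at hall
          exact hvne (Equiv.ext hall)
        have hz₀U : z₀ ∈ blockU H₁ f Y₀ (r - 1) := by
          by_contra hzU
          apply hz₀
          rw [hoff z₀ hzU, hh1]
          rfl
        obtain ⟨a, ha, x₀, hx₀, hz₀e⟩ := mem_blockU.mp hz₀U
        obtain ⟨h', hh', w, hw, e⟩ := Cstar hs hvr a ha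
        have hwX : ⇑w '' X = X := image_eq_of_fixOff w X (fun z hz => suppLint hs hw z hz)
        have himg : ⇑v '' (⇑a '' X) = ⇑h' '' X := by
          rw [image_comp_of_eqOn e, hwX]
        have hax : ∀ x ∈ X, h' x = a x := by
          apply dich2 hs hh' ha
          rw [← himg, hstab a ha, Set.inter_self]
          exact ((pw hs (r - 1)).2.2.2.1).image ⇑a
        have hwx₀ : w x₀ ≠ x₀ := by
          intro heq
          apply hz₀
          rw [← hz₀e, e x₀ hx₀, heq, hax x₀ hx₀]
        have hwne : w ≠ 1 := fun h1 => hwx₀ (by rw [h1]; rfl)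
        have haG : a ∈ G := hG (r - 1) (by omega) ha
        have hδ' : a⁻¹ * δ * a ∈ N := by
          have h2 := hnorm a⁻¹ (inv_mem haG) δ hδ
          rwa [inv_inv] at h2
        have hagree' : ∀ x ∈ Yi f Y₀ (r - 1 - 1), (a⁻¹ * δ * a) x = w x := by
          intro x hx
          have haxY : a x ∈ Yi f Y₀ (r - 1) := block_sub hs ha ⟨x, hx, rfl⟩
          have hwxX : w x ∈ X := by rw [← hwX]; exact ⟨x, hx, rfl⟩
          simp only [Equiv.Perm.mul_apply]
          rw [hagree _ haxY, e x hx, hax _ hwxX, Equiv.Perm.inv_apply_self]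
        exact ih (r - 1) b (by omega) w (a⁻¹ * δ * a) hw hwne hagree' hδ'
          (fun j hj => hG j (by omega))
      · -- Case A : v moves a block off itself
        push_neg at hstab
        obtain ⟨a, ha, hmv⟩ := hstab
        obtain ⟨h', hh', w, hw, e⟩ := Cstar hs hvr a ha
        have hwX : ⇑w '' X = X := image_eq_of_fixOff w X (fun z hz => suppLint hs hw z hz)
        have himg : ⇑v '' (⇑a '' X) = ⇑h' '' X := by
          rw [image_comp_of_eqOn e, hwX]
        have hdisj0 : ¬ (⇑h' '' X ∩ ⇑a '' X).Nonempty := by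
          intro hne
          exact hmv (by rw [himg]; exact dich2_img hs hh' ha hne)
        set u : Equiv.Perm Z := a * f ^ (r - 1) with hu
        set B : Set Z := ⇑a '' X with hB
        set C : Subgroup (Equiv.Perm Z) :=
          Subgroup.map (MulAut.conj u).toMonoidHom (Lseq H₁ f 0) with hC
        have hpow : f ^ (r - 1) * f ^ (-1 : ℤ) = f ^ (r - 1 - 1) := by
          rw [← zpow_add]; congr 1
        have huB : ⇑u '' Yi f Y₀ (-1 : ℤ) = B := by
          show ⇑(a * f ^ (r - 1)) '' (⇑(f ^ (-1 : ℤ)) '' Y₀) = B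
          rw [image_mul, ← image_mul (f ^ (r - 1)) (f ^ (-1 : ℤ)) Y₀, hpow]
          rfl
        have hCsupp : ∀ c ∈ C, ∀ z, z ∉ B → c z = z := by
          intro c hc z hz
          obtain ⟨l, hl, rfl⟩ := mem_image_conj.mp hc
          have hzin : u⁻¹ z ∉ Yi f Y₀ (-1 : ℤ) := by
            intro hmem
            apply hz
            rw [← huB]
            exact ⟨u⁻¹ z, hmem, u.apply_inv_self z⟩
          have hfix : l (u⁻¹ z) = u⁻¹ z := by
            apply suppLseq hs (r := 0) hl
            rwa [show (0 : ℤ) - 1 = -1 by norm_num]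
          simp only [Equiv.Perm.mul_apply, hfix, Equiv.Perm.apply_inv_self]
        have hCG : ∀ c ∈ C, c ∈ G := by
          intro c hc
          obtain ⟨l, hl, rfl⟩ := mem_image_conj.mp hc
          have h1 : f ^ (r - 1) * l * (f ^ (r - 1))⁻¹ ∈ Lseq H₁ f (r - 1) := by
            rw [← Lseq_conj (t := r - 1)]
            exact mem_image_conj.mpr ⟨l, hl, rfl⟩
          have h2 : f ^ (r - 1) * l * (f ^ (r - 1))⁻¹ ∈ G :=
            Lseq_le_of_forall (fun j hj => hG j (by omega)) h1
          have haG : a ∈ G := hG (r - 1) (by omega) ha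
          have hrw : u * l * u⁻¹ = a * (f ^ (r - 1) * l * (f ^ (r - 1))⁻¹) * a⁻¹ := by
            rw [hu]
            simp [mul_inv_rev, mul_assoc]
          rw [hrw]
          exact mul_mem (mul_mem haG h2) (inv_mem haG)
        have hdisjB : ∀ z ∈ B, δ z ∉ B := by
          intro z hzB hzB2
          have hzY : z ∈ Yi f Y₀ (r - 1) := block_sub hs ha hzB
          have hmem2 : δ z ∈ ⇑h' '' X := by
            rw [← himg, hagree z hzY]
            exact Set.mem_image_of_mem _ hzB
          exact hdisj0 ⟨δ z, hmem2, hzB2⟩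
        obtain ⟨S, hSN, φ, hφ⟩ := finish N C B δ hδ hCsupp
          (fun c hc n' hn' => hnorm c (hCG c hc) n' hn') hdisjB
        refine ⟨S, hSN, ?_⟩
        have heq : Subgroup.map ((MulAut.conj u : Equiv.Perm Z ≃* Equiv.Perm Z) :
            Equiv.Perm Z →* Equiv.Perm Z) (Lseq H₁ f 0) = C := by
          rw [hC, MulEquiv.toMonoidHom_eq_coe]
        have iso : (Lseq H₁ f 0) ≃* C :=
          heq ▸ MulEquiv.subgroupMap (MulAut.conj u) (Lseq H₁ f 0)
        exact ⟨iso.symm.toMonoidHom.comp φ, iso.symm.surjective.comp hφ⟩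

end MainPart

end Stmt13Aux

/-- In the inductive setting, every nontrivial normal subgroup of `M`
contains a subgroup that surjects onto `L₀`, and likewise every nontrivial normal
subgroup of each `Lᵢ` contains a subgroup that surjects onto `L₀`. -/
theorem stmt13 {Z : Type*} (H₁ : Subgroup (Equiv.Perm Z)) (f : Equiv.Perm Z)
    (Y₀ W₀ : Set Z) (hsetting : InductiveSetting H₁ f Y₀ W₀) :
    (∀ N : Subgroup (Equiv.Perm Z), N ≤ Mgrp H₁ f →
      (∀ m ∈ Mgrp H₁ f, ∀ n ∈ N, m * n * m⁻¹ ∈ N) → N ≠ ⊥ →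
      ∃ S : Subgroup (Equiv.Perm Z), S ≤ N ∧
        ∃ φ : S →* Lseq H₁ f 0, Function.Surjective φ) ∧
    (∀ i : ℤ, ∀ N : Subgroup (Equiv.Perm Z), N ≤ Lseq H₁ f i →
      (∀ m ∈ Lseq H₁ f i, ∀ n ∈ N, m * n * m⁻¹ ∈ N) → N ≠ ⊥ →
      ∃ S : Subgroup (Equiv.Perm Z), S ≤ N ∧
        ∃ φ : S →* Lseq H₁ f 0, Function.Surjective φ) := by
  constructor
  · intro N hNM hnorm hNbot
    obtain ⟨g, hgne⟩ := Subgroup.ne_bot_iff_exists_ne_one.mp hNbot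
    have hgN : (g : Equiv.Perm Z) ∈ N := g.2
    have hgne' : (g : Equiv.Perm Z) ≠ 1 := fun h => hgne (Subtype.ext h)
    obtain ⟨n, hgL⟩ := Stmt13Aux.exists_Lint_of_mem_M (hNM hgN)
    exact Stmt13Aux.main hsetting (Mgrp H₁ f) N hnorm (2 * n) n (-(n : ℤ))
      (by omega) g g hgL hgne' (fun x _ => rfl) hgN
      (fun j _ => Stmt13Aux.Hseq_le_M j)
  · intro i N hNL hnorm hNbot
    obtain ⟨g, hgne⟩ := Subgroup.ne_bot_iff_exists_ne_one.mp hNbot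
    have hgN : (g : Equiv.Perm Z) ∈ N := g.2
    have hgne' : (g : Equiv.Perm Z) ≠ 1 := fun h => hgne (Subtype.ext h)
    obtain ⟨n, hgL⟩ := Stmt13Aux.exists_Lint_of_mem_Lseq (hNL hgN)
    exact Stmt13Aux.main hsetting (Lseq H₁ f i) N hnorm n i (i - (n : ℤ))
      (by omega) g g hgL hgne' (fun x _ => rfl) hgN
      (fun j hj => Stmt13Aux.Hseq_le_Lseq hj)
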